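/- The operator B f := |f'| with domain D(B) = BUC¹(ℝ) (bounded uniformly continuous f with bounded uniformly continuous derivative), viewed in BUC(ℝ), is accretive: for all f₁, f₂ ∈ BUC¹(ℝ) and h > 0, ‖f₁ − f₂ + h(|f₁'| − |f₂'|)‖_∞ ≥ ‖f₁ − f₂‖_∞. -/

import Mathlib

open Set

/-- At a point `y` where a differentiable function `g` (bounded above by `S`, with uniformly
continuous derivative) nearly attains its supremum, the derivative is small. -/
lemma key_near_max (g : ℝ → ℝ) (hd : Differentiable ℝ g) (S η t : ℝ) (ht : 0 < t)
    (huc : ∀ u v : ℝ, |u - v| ≤ 2 * t → |deriv g u - deriv g v| ≤ η / 2)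
    (hbd : ∀ x, g x ≤ S) (y : ℝ) (hy : S - t * η / 2 ≤ g y) :
    |deriv g y| ≤ η := by
  obtain ⟨z, hz, hz'⟩ := exists_deriv_eq_slope g (show y < y + t by linarith)
    hd.continuous.continuousOn (hd.differentiableOn)
  obtain ⟨w, hw, hw'⟩ := exists_deriv_eq_slope g (show y - t < y by linarith)
    hd.continuous.continuousOn (hd.differentiableOn)
  have hzt : y + t - y = t := by ring
  have hwt : y - (y - t) = t := by ring
  have hz2 : deriv g z ≤ η / 2 := by
    rw [hz', hzt, div_le_iff₀ ht]
    have h1 := hbd (y + t)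
    nlinarith
  have hw2 : -(η / 2) ≤ deriv g w := by
    rw [hw', hwt, le_div_iff₀ ht]
    have h1 := hbd (y - t)
    nlinarith
  have hyz : |deriv g y - deriv g z| ≤ η / 2 := by
    apply huc
    rw [abs_le]; constructor <;> [nlinarith [hz.1, hz.2]; nlinarith [hz.1, hz.2]]
  have hyw : |deriv g y - deriv g w| ≤ η / 2 := by
    apply huc
    rw [abs_le]; constructor <;> [nlinarith [hw.1, hw.2]; nlinarith [hw.1, hw.2]]
  rw [abs_le] at hyz hyw ⊢
  constructor <;> linarith [hyz.1, hyz.2, hyw.1, hyw.2]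

/-- The operator `B f = |f'|` with domain `BUC¹(ℝ)` is accretive: for `f₁, f₂ ∈ BUC¹(ℝ)` and
`h > 0`, `‖f₁ - f₂ + h(|f₁'| - |f₂'|)‖_∞ ≥ ‖f₁ - f₂‖_∞` (stated via arbitrary sup-norm
bounds `C`). -/
theorem stmt10 (f₁ f₂ : ℝ → ℝ)
    (hb₁ : ∃ C, ∀ x, |f₁ x| ≤ C) (hu₁ : UniformContinuous f₁)
    (hd₁ : Differentiable ℝ f₁)
    (hb₁' : ∃ C, ∀ x, |deriv f₁ x| ≤ C) (hu₁' : UniformContinuous (deriv f₁))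
    (hb₂ : ∃ C, ∀ x, |f₂ x| ≤ C) (hu₂ : UniformContinuous f₂)
    (hd₂ : Differentiable ℝ f₂)
    (hb₂' : ∃ C, ∀ x, |deriv f₂ x| ≤ C) (hu₂' : UniformContinuous (deriv f₂))
    (h : ℝ) (hh : 0 < h) (C : ℝ)
    (hC : ∀ x, |f₁ x - f₂ x + h * (|deriv f₁ x| - |deriv f₂ x|)| ≤ C) :
    ∀ x, |f₁ x - f₂ x| ≤ C := by
  obtain ⟨C₁, hC₁⟩ := hb₁
  obtain ⟨C₂, hC₂⟩ := hb₂
  set g : ℝ → ℝ := fun x => f₁ x - f₂ x with hgdef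
  have hdg : Differentiable ℝ g := hd₁.sub hd₂
  have hderiv : ∀ x, deriv g x = deriv f₁ x - deriv f₂ x := fun x => deriv_sub (hd₁ x) (hd₂ x)
  have hucg' : UniformContinuous (fun x => deriv f₁ x - deriv f₂ x) := hu₁'.sub hu₂'
  have hS_bdd : BddAbove (Set.range fun x => |g x|) := by
    refine ⟨C₁ + C₂, ?_⟩
    rintro _ ⟨y, rfl⟩
    calc |g y| ≤ |f₁ y| + |f₂ y| := abs_sub _ _
    _ ≤ C₁ + C₂ := add_le_add (hC₁ y) (hC₂ y)
  set S := sSup (Set.range fun x => |g x|) with hSdef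
  have hgS : ∀ y, |g y| ≤ S := fun y => le_csSup hS_bdd ⟨y, rfl⟩
  intro x
  refine le_trans (hgS x) (le_of_forall_pos_le_add ?_)
  intro ε hε
  set η := ε / (2 * h) with hηdef
  have hη : 0 < η := by positivity
  obtain ⟨δ, hδ, hδ'⟩ := Metric.uniformContinuous_iff.mp hucg' (η / 2) (by positivity)
  set t := min (δ / 3) (2 * h) with htdef
  have ht : 0 < t := lt_min (by positivity) (by positivity)
  have huc : ∀ u v : ℝ, |u - v| ≤ 2 * t → |deriv g u - deriv g v| ≤ η / 2 := by
    intro u v huv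
    rw [hderiv, hderiv]
    have h2t : 2 * t ≤ 2 * (δ / 3) := by
      have := min_le_left (δ / 3) (2 * h); linarith
    have hd' : dist u v < δ := by
      rw [Real.dist_eq]; linarith
    have := hδ' hd'
    rw [Real.dist_eq] at this
    linarith
  -- pick a near-supremum point
  have hlt : S - t * η / 2 < S := by nlinarith
  obtain ⟨_, ⟨y, rfl⟩, hy⟩ := exists_lt_of_lt_csSup (Set.range_nonempty _) hlt
  replace hy : S - t * η / 2 < |g y| := hy
  -- at y, the derivative of g is small in absolute value
  have hsmall : |deriv g y| ≤ η := by
    rcases le_or_gt 0 (g y) with hsign | hsign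
    · refine key_near_max g hdg S η t ht huc (fun z => (le_abs_self _).trans (hgS z)) y ?_
      rw [abs_of_nonneg hsign] at hy; linarith
    · have hdneg : Differentiable ℝ (fun z => -g z) := hdg.neg
      have hnd : ∀ z, deriv (fun z => -g z) z = -deriv g z := fun z => deriv.neg
      have := key_near_max (fun z => -g z) hdneg S η t ht
        (fun u v huv => by
          rw [hnd u, hnd v]
          have h5 := huc u v huv
          rwa [show -deriv g u - -deriv g v = -(deriv g u - deriv g v) by ring, abs_neg])
        (fun z => (neg_le_abs _).trans (hgS z)) y
        (show S - t * η / 2 ≤ -g y by rw [abs_of_neg hsign] at hy; linarith)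
      rwa [hnd, abs_neg] at this
  -- conclude
  have hKey := hC y
  have hgy : g y = f₁ y - f₂ y := rfl
  set D : ℝ := |deriv f₁ y| - |deriv f₂ y| with hDdef
  have habs : |D| ≤ |deriv g y| := by
    rw [hderiv, hDdef]; exact abs_abs_sub_abs_le_abs_sub _ _
  have h3 : |h * D| ≤ h * η := by
    rw [abs_mul, abs_of_pos hh]
    exact mul_le_mul_of_nonneg_left (habs.trans hsmall) hh.le
  have h4 : |g y| ≤ |g y + h * D| + |h * D| := by
    have h6 := abs_sub (g y + h * D) (h * D)
    rwa [add_sub_cancel_right] at h6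
  have h7 : |g y + h * D| ≤ C := by rw [hgy]; exact hKey
  have h1 : |g y| ≤ C + h * η := by linarith
  have htη : t * η / 2 ≤ h * η := by
    have := min_le_right (δ / 3) (2 * h)
    nlinarith
  have hhη : h * η = ε / 2 := by rw [hηdef, mul_div_assoc', div_eq_div_iff (by positivity) (by norm_num)]; ring
  linarith
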